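/- Let x ∈ {2, −2} and A = (0 −1; 1 x) ∈ GL₂ℤ. Then S_A = {v ∈ ℤ² : ℤv + ℤ(Av) = ℤ²} equals {(a,b) ∈ ℤ² : a + (x/2)·b = ±1} (for x = 2 this is {(a,b) : (a+b)² = 1}), and the subgroup H_A of GL₂ℤ generated by A and −Id acts transitively on S_A. -/

import Mathlib

open Matrix

abbrev GL2Z := GL (Fin 2) ℤ

/-- `S_A = {v ∈ ℤ² : ℤv + ℤ(Av) = ℤ²}`. -/
def SA (A : GL2Z) : Set (Fin 2 → ℤ) :=
  {v | Submodule.span ℤ {v, (A : Matrix (Fin 2) (Fin 2) ℤ).mulVec v} = ⊤}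

/-- `H_A = ⟨A, -Id⟩ ≤ GL₂ℤ`. -/
def HA (A : GL2Z) : Subgroup GL2Z := Subgroup.closure {A, -1}

lemma mulVec_explicit (x : ℤ) (A : GL2Z)
    (hA : (A : Matrix (Fin 2) (Fin 2) ℤ) = !![0, -1; 1, x]) (v : Fin 2 → ℤ) :
    (A : Matrix (Fin 2) (Fin 2) ℤ).mulVec v = ![-v 1, v 0 + x * v 1] := by
  funext i
  fin_cases i <;>
    simp [hA, Matrix.mulVec, dotProduct, Fin.sum_univ_two]

lemma mem_SA_iff (x : ℤ) (A : GL2Z)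
    (hA : (A : Matrix (Fin 2) (Fin 2) ℤ) = !![0, -1; 1, x]) (v : Fin 2 → ℤ) :
    v ∈ SA A ↔
      (v 0 * (v 0 + x * v 1) + v 1 * v 1 = 1 ∨
       v 0 * (v 0 + x * v 1) + v 1 * v 1 = -1) := by
  have hAv := mulVec_explicit x A hA v
  set M : Matrix (Fin 2) (Fin 2) ℤ := (Matrix.of ![v, ![-v 1, v 0 + x * v 1]])ᵀ with hM
  have hrange : Set.range Mᵀ = {v, ![-v 1, v 0 + x * v 1]} := by
    rw [hM, transpose_transpose]
    exact Matrix.range_cons_cons_empty _ _ _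
  have hdet : M.det = v 0 * (v 0 + x * v 1) + v 1 * v 1 := by
    rw [hM, Matrix.det_transpose, Matrix.det_fin_two]
    simp
  have hiff : v ∈ SA A ↔ Function.Surjective M.mulVec := by
    rw [SA, Set.mem_setOf_eq, hAv, ← hrange]
    change Submodule.span ℤ (Set.range M.col) = ⊤ ↔ _
    rw [← Matrix.range_mulVecLin,
      LinearMap.range_eq_top]
    exact Iff.rfl
  rw [hiff, Matrix.mulVec_surjective_iff_isUnit, Matrix.isUnit_iff_isUnit_det, hdet,
    Int.isUnit_iff]

lemma SA_eq (x : ℤ) (hx : x = 2 ∨ x = -2) (A : GL2Z)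
    (hA : (A : Matrix (Fin 2) (Fin 2) ℤ) = !![0, -1; 1, x]) :
    SA A = {v : Fin 2 → ℤ | v 0 + (x / 2) * v 1 = 1 ∨ v 0 + (x / 2) * v 1 = -1} := by
  ext v
  rw [mem_SA_iff x A hA v]
  rcases hx with rfl | rfl <;> norm_num <;> constructor
  · rintro (h | h)
    · have h2 : (v 0 + v 1) * (v 0 + v 1) = 1 := by ring_nf; ring_nf at h; linarith
      exact Int.isUnit_iff.mp (IsUnit.of_mul_eq_one _ h2)
    · exfalso; nlinarith [sq_nonneg (v 0 + v 1)]
  · rintro (h | h) <;> left <;> nlinarith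
  · rintro (h | h)
    · have h2 : (v 0 - v 1) * (v 0 - v 1) = 1 := by nlinarith
      rcases Int.isUnit_iff.mp (IsUnit.of_mul_eq_one _ h2) with h3 | h3
      · left; linarith
      · right; linarith
    · exfalso; nlinarith [sq_nonneg (v 0 - v 1)]
  · rintro (h | h) <;> left <;> nlinarith

lemma A_mem_HA (A : GL2Z) : A ∈ HA A :=
  Subgroup.subset_closure (Set.mem_insert _ _)

lemma neg_one_mem_HA (A : GL2Z) : (-1 : GL2Z) ∈ HA A :=
  Subgroup.subset_closure (Set.mem_insert_of_mem _ rfl)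

lemma mulVec_cancel' (M : GL2Z) (u : Fin 2 → ℤ) :
    ((M⁻¹ : GL2Z) : Matrix (Fin 2) (Fin 2) ℤ).mulVec
      ((M : Matrix (Fin 2) (Fin 2) ℤ).mulVec u) = u := by
  rw [Matrix.mulVec_mulVec, ← Units.val_mul, inv_mul_cancel, Units.val_one, Matrix.one_mulVec]

lemma mulVec_cancel (M : GL2Z) (u : Fin 2 → ℤ) :
    (M : Matrix (Fin 2) (Fin 2) ℤ).mulVec
      (((M⁻¹ : GL2Z) : Matrix (Fin 2) (Fin 2) ℤ).mulVec u) = u := by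
  rw [Matrix.mulVec_mulVec, ← Units.val_mul, mul_inv_cancel, Units.val_one, Matrix.one_mulVec]

lemma reach (x : ℤ) (hx : x = 2 ∨ x = -2) (A : GL2Z)
    (hA : (A : Matrix (Fin 2) (Fin 2) ℤ) = !![0, -1; 1, x]) :
    ∀ n : ℕ, ∀ v : Fin 2 → ℤ, (v 1).natAbs = n →
      (v 0 + (x / 2) * v 1 = 1 ∨ v 0 + (x / 2) * v 1 = -1) →
      ∃ B ∈ HA A, (B : Matrix (Fin 2) (Fin 2) ℤ).mulVec ![1, 0] = v := by
  have hAinv : ((A⁻¹ : GL2Z) : Matrix (Fin 2) (Fin 2) ℤ) = !![x, 1; -1, 0] := by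
    apply Units.inv_eq_of_mul_eq_one_right
    ext i j
    fin_cases i <;> fin_cases j <;>
      simp [hA, Matrix.mul_apply, Fin.sum_univ_two]
  intro n
  induction n using Nat.strong_induction_on with
  | _ n ih =>
    intro v hn hv
    by_cases h0 : v 1 = 0
    · -- base case
      have hv0 : v 0 = 1 ∨ v 0 = -1 := by
        rcases hx with rfl | rfl <;> norm_num [h0] at hv <;> exact hv
      rcases hv0 with h1 | h1
      · refine ⟨1, one_mem _, ?_⟩
        funext i; fin_cases i <;> simp [h1, h0]
      · refine ⟨-1, neg_one_mem_HA A, ?_⟩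
        funext i; fin_cases i <;> simp [Matrix.neg_mulVec, h1, h0]
    · -- inductive step
      have hred : (v 0 + x * v 1).natAbs < n ∨ (v 0).natAbs < n := by
        rcases hx with rfl | rfl <;> norm_num at hv <;> omega
      have hAv := mulVec_explicit x A hA v
      have hAiv : ((A⁻¹ : GL2Z) : Matrix (Fin 2) (Fin 2) ℤ).mulVec v
          = ![x * v 0 + v 1, -v 0] := by
        funext i
        fin_cases i <;>
          simp [hAinv, Matrix.mulVec, dotProduct, Fin.sum_univ_two]
      rcases hred with h | h
      · -- use w = A v, B = A⁻¹ * B'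
        obtain ⟨B', hB'mem, hB'⟩ := ih (v 0 + x * v 1).natAbs h
          ![-v 1, v 0 + x * v 1] (by simp) (by rcases hx with rfl | rfl <;>
            norm_num at hv ⊢ <;> omega)
        refine ⟨A⁻¹ * B', mul_mem (inv_mem (A_mem_HA A)) hB'mem, ?_⟩
        rw [Units.val_mul, ← Matrix.mulVec_mulVec, hB', ← hAv, mulVec_cancel' A]
      · -- use w = A⁻¹ v, B = A * B'
        obtain ⟨B', hB'mem, hB'⟩ := ih (v 0).natAbs (by simpa using h)
          ![x * v 0 + v 1, -v 0] (by simp) (by rcases hx with rfl | rfl <;>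
            norm_num at hv ⊢ <;> omega)
        refine ⟨A * B', mul_mem (A_mem_HA A) hB'mem, ?_⟩
        rw [Units.val_mul, ← Matrix.mulVec_mulVec, hB', ← hAiv, mulVec_cancel A]

theorem case_x_eq_pm_two (x : ℤ) (hx : x = 2 ∨ x = -2) (A : GL2Z)
    (hA : (A : Matrix (Fin 2) (Fin 2) ℤ) = !![0, -1; 1, x]) :
    SA A = {v : Fin 2 → ℤ | v 0 + (x / 2) * v 1 = 1 ∨ v 0 + (x / 2) * v 1 = -1} ∧
    (x = 2 → SA A = {v : Fin 2 → ℤ | (v 0 + v 1) ^ 2 = 1}) ∧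
    (∀ v ∈ SA A, ∀ w ∈ SA A,
      ∃ B ∈ HA A, (B : Matrix (Fin 2) (Fin 2) ℤ).mulVec v = w) := by
  have hSA := SA_eq x hx A hA
  refine ⟨hSA, ?_, ?_⟩
  · rintro rfl
    rw [hSA]
    ext v
    simp only [Set.mem_setOf_eq]
    norm_num
  · intro v hv w hw
    rw [hSA, Set.mem_setOf_eq] at hv hw
    obtain ⟨Bv, hBvmem, hBv⟩ := reach x hx A hA (v 1).natAbs v rfl hv
    obtain ⟨Bw, hBwmem, hBw⟩ := reach x hx A hA (w 1).natAbs w rfl hw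
    refine ⟨Bw * Bv⁻¹, mul_mem hBwmem (inv_mem hBvmem), ?_⟩
    rw [← hBv, Matrix.mulVec_mulVec, ← Units.val_mul, mul_assoc, inv_mul_cancel,
      mul_one, hBw]
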